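/- Let P be the τ-nice sampling on {1,...,n} (uniform distribution over all subsets of cardinality τ, with 1 ≤ τ ≤ n). Then for all vectors a_1,...,a_n in R^d, E_{S∼P}[‖Σ_{i∈S} (n/τ) a_i‖²] = (n(n−τ))/(τ(n−1)) · Σ_{i=1}^n ‖a_i‖² + (n(τ−1))/(τ(n−1)) · ‖Σ_{i=1}^n a_i‖². -/

import Mathlib

open Finset

noncomputable section

lemma count_sub {α : Type*} [DecidableEq α] (s t : Finset α) (hts : t ⊆ s) (k : ℕ)
    (hk : t.card ≤ k) :
    ((s.powersetCard k).filter (fun S => t ⊆ S)).card = (s.card - t.card).choose (k - t.card) := by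
  rw [← card_sdiff_of_subset hts, ← card_powersetCard]
  apply card_nbij' (fun S => S \ t) (fun T => T ∪ t)
  · intro S hS
    simp only [mem_coe, mem_filter, mem_powersetCard] at hS
    obtain ⟨⟨hSs, hcard⟩, htS⟩ := hS
    rw [mem_coe, mem_powersetCard]
    exact ⟨sdiff_subset_sdiff hSs le_rfl, by rw [card_sdiff_of_subset htS, hcard]⟩
  · intro T hT
    rw [mem_coe, mem_powersetCard] at hT
    obtain ⟨hTs, hcard⟩ := hT
    have hdisj : Disjoint T t := (sdiff_disjoint.mono_left hTs)
    simp only [mem_coe, mem_filter, mem_powersetCard]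
    refine ⟨⟨union_subset (hTs.trans sdiff_subset) hts, ?_⟩, subset_union_right⟩
    rw [card_union_of_disjoint hdisj, hcard]
    omega
  · intro S hS
    simp only [mem_coe, mem_filter, mem_powersetCard] at hS
    exact sdiff_union_of_subset hS.2
  · intro T hT
    rw [mem_coe, mem_powersetCard] at hT
    exact union_sdiff_cancel_right (sdiff_disjoint.mono_left hT.1)

theorem stmt1 {d n τ : ℕ} (hn : 2 ≤ n) (hτ1 : 1 ≤ τ) (hτn : τ ≤ n)
    (a : Fin n → EuclideanSpace ℝ (Fin d)) :
    ∑ S : Finset (Fin n),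
        (if S.card = τ then ((n.choose τ : ℝ))⁻¹ else 0) *
          ‖∑ i ∈ S, ((n : ℝ) / (τ : ℝ)) • a i‖ ^ 2 =
      ((n : ℝ) * ((n : ℝ) - (τ : ℝ))) / ((τ : ℝ) * ((n : ℝ) - 1)) * ∑ i, ‖a i‖ ^ 2 +
      ((n : ℝ) * ((τ : ℝ) - 1)) / ((τ : ℝ) * ((n : ℝ) - 1)) * ‖∑ i, a i‖ ^ 2 := by
  classical
  set c : ℝ := (n : ℝ) / (τ : ℝ) with hc
  set g : Fin n → Fin n → ℝ := fun i j => inner ℝ (a i) (a j) with hg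
  set P : Finset (Finset (Fin n)) := (univ : Finset (Fin n)).powersetCard τ with hP
  have hn0 : (n : ℝ) ≠ 0 := by positivity
  have hτ0 : (τ : ℝ) ≠ 0 := by
    simp only [ne_eq, Nat.cast_eq_zero]; omega
  have hn1 : (n : ℝ) - 1 ≠ 0 := by
    have : (2:ℝ) ≤ (n:ℝ) := by exact_mod_cast hn
    nlinarith
  have hC0 : (n.choose τ : ℝ) ≠ 0 := by
    simp only [ne_eq, Nat.cast_eq_zero]
    exact (Nat.choose_pos hτn).ne'
  -- rewrite the sum over all finsets as a sum over P
  have step1 : ∑ S : Finset (Fin n),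
      (if S.card = τ then ((n.choose τ : ℝ))⁻¹ else 0) * ‖∑ i ∈ S, c • a i‖ ^ 2
      = ∑ S ∈ P, ((n.choose τ : ℝ))⁻¹ * ‖∑ i ∈ S, c • a i‖ ^ 2 := by
    rw [hP, powersetCard_eq_filter, powerset_univ, sum_filter]
    exact sum_congr rfl fun S _ => by split <;> simp
  -- expand the norm
  have hcnn : 0 ≤ c := by positivity
  have step2 : ∀ S : Finset (Fin n), ‖∑ i ∈ S, c • a i‖ ^ 2
      = c ^ 2 * ∑ i ∈ S, ∑ j ∈ S, g i j := by
    intro S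
    rw [← smul_sum, norm_smul, mul_pow, Real.norm_eq_abs, sq_abs]
    congr 1
    rw [← real_inner_self_eq_norm_sq, sum_inner]
    exact sum_congr rfl fun i _ => inner_sum _ _ _
  -- expand the inner double sum with indicators
  have step3 : ∀ S : Finset (Fin n), ∑ i ∈ S, ∑ j ∈ S, g i j
      = ∑ i, ∑ j, if i ∈ S ∧ j ∈ S then g i j else 0 := by
    intro S
    have h1 : ∀ i, ∑ j, (if i ∈ S ∧ j ∈ S then g i j else 0)
        = if i ∈ S then ∑ j ∈ S, g i j else 0 := by
      intro i
      by_cases hi : i ∈ S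
      · simp only [hi, true_and, if_true]
        rw [← sum_filter, filter_mem_eq_inter, univ_inter]
      · simp [hi]
    rw [sum_congr rfl fun i _ => h1 i, ← sum_filter, filter_mem_eq_inter, univ_inter]
  -- swap sums; K2 counts
  set K2 : Fin n → Fin n → ℕ := fun i j => (P.filter (fun S => i ∈ S ∧ j ∈ S)).card with hK2
  have step4 : ∑ S ∈ P, ∑ i, ∑ j, (if i ∈ S ∧ j ∈ S then g i j else 0)
      = ∑ i, ∑ j, (K2 i j : ℝ) * g i j := by
    rw [sum_comm]
    refine sum_congr rfl fun i _ => ?_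
    rw [sum_comm]
    refine sum_congr rfl fun j _ => ?_
    rw [← sum_filter, sum_const, nsmul_eq_mul]
  -- nat identities
  have id1 : n * (n-1).choose (τ-1) = n.choose τ * τ := by
    obtain ⟨n', rfl⟩ : ∃ n', n = n' + 1 := ⟨n - 1, by omega⟩
    obtain ⟨τ', rfl⟩ : ∃ τ', τ = τ' + 1 := ⟨τ - 1, by omega⟩
    simpa [Nat.succ_eq_add_one] using Nat.add_one_mul_choose_eq n' τ'
  have hK2diag : ∀ i, K2 i i = (n-1).choose (τ-1) := by
    intro i
    have he : P.filter (fun S => i ∈ S ∧ i ∈ S)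
        = P.filter (fun S => ({i} : Finset (Fin n)) ⊆ S) := by
      apply filter_congr; intro S _; simp
    show (P.filter (fun S => i ∈ S ∧ i ∈ S)).card = (n-1).choose (τ-1)
    rw [he, hP, count_sub _ _ (subset_univ _) _ (by simpa using hτ1)]
    simp
  have hA : ∀ i, (K2 i i : ℝ) = (n.choose τ : ℝ) * τ / n := by
    intro i
    have := congrArg (fun m : ℕ => (m : ℝ)) id1
    push_cast at this
    rw [hK2diag i]
    field_simp
    push_cast [← this]
    ring
  have hBv : ∀ i j, i ≠ j → (K2 i j : ℝ)
      = (n.choose τ : ℝ) * ((τ : ℝ) * ((τ : ℝ) - 1)) / ((n : ℝ) * ((n : ℝ) - 1)) := by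
    intro i j hij
    rcases eq_or_lt_of_le hτ1 with hτeq | hτ2
    · -- τ = 1 : both sides zero
      have hzero : K2 i j = 0 := by
        rw [hK2, card_eq_zero, filter_eq_empty_iff]
        rintro S hS ⟨hi, hj⟩
        rw [hP, mem_powersetCard] at hS
        have hsub : ({i, j} : Finset (Fin n)) ⊆ S := by
          intro x hx; simp at hx; rcases hx with rfl | rfl <;> assumption
        have := card_le_card hsub
        rw [card_pair hij, hS.2, ← hτeq] at this
        omega
      rw [hzero, ← hτeq]
      norm_num
    · -- 2 ≤ τ
      have hτ2' : 2 ≤ τ := hτ2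
      have id2 : n * (n-1) * ((n-2).choose (τ-2)) = n.choose τ * (τ * (τ-1)) := by
        obtain ⟨n', rfl⟩ : ∃ n', n = n' + 2 := ⟨n - 2, by omega⟩
        obtain ⟨τ', rfl⟩ : ∃ τ', τ = τ' + 2 := ⟨τ - 2, by omega⟩
        have h1 := Nat.add_one_mul_choose_eq n' τ'
        have h2 := Nat.add_one_mul_choose_eq (n'+1) (τ'+1)
        simp only [show n' + 2 - 1 = n' + 1 from rfl, show n' + 2 - 2 = n' from rfl,
          show τ' + 2 - 1 = τ' + 1 from rfl, show τ' + 2 - 2 = τ' from rfl]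
        calc (n'+2) * (n'+1) * n'.choose τ'
            = (n'+2) * ((n'+1) * n'.choose τ') := by ring
          _ = (n'+2) * ((n'+1).choose (τ'+1) * (τ'+1)) := by rw [h1]
          _ = ((n'+2) * (n'+1).choose (τ'+1)) * (τ'+1) := by ring
          _ = ((n'+2).choose (τ'+2) * (τ'+2)) * (τ'+1) := by rw [h2]
          _ = (n'+2).choose (τ'+2) * ((τ'+2) * (τ'+1)) := by ring
      have hK2off : K2 i j = (n-2).choose (τ-2) := by
        have he : P.filter (fun S => i ∈ S ∧ j ∈ S)
            = P.filter (fun S => ({i, j} : Finset (Fin n)) ⊆ S) := by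
          apply filter_congr; intro S _
          simp [insert_subset_iff]
        show (P.filter (fun S => i ∈ S ∧ j ∈ S)).card = (n-2).choose (τ-2)
        rw [he, hP, count_sub _ _ (subset_univ _) _ (by rw [card_pair hij]; omega)]
        simp [card_pair hij]
      have := congrArg (fun m : ℕ => (m : ℝ)) id2
      push_cast [Nat.cast_sub hτ1, Nat.cast_sub (show 1 ≤ n by omega)] at this
      rw [hK2off]
      field_simp
      linarith [this]
  set A : ℝ := (n.choose τ : ℝ) * τ / n with hAdef
  set B : ℝ := (n.choose τ : ℝ) * ((τ : ℝ) * ((τ : ℝ) - 1)) / ((n : ℝ) * ((n : ℝ) - 1)) with hBdef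
  have hKval : ∀ i j, (K2 i j : ℝ) = (if i = j then A - B else 0) + B := by
    intro i j
    by_cases h : i = j
    · subst h; rw [hA i]; simp [hAdef]
    · simp [h, hBv i j h]
  have step5 : ∑ i, ∑ j, (K2 i j : ℝ) * g i j
      = (A - B) * (∑ i, g i i) + B * (∑ i, ∑ j, g i j) := by
    simp only [hKval, add_mul, ite_mul, zero_mul, sum_add_distrib, ← mul_sum]
    congr 1
    rw [mul_sum]
    refine sum_congr rfl fun i _ => ?_
    rw [sum_ite_eq univ i (fun j => (A - B) * g i j)]
    simp
  have hSq : ∑ i, g i i = ∑ i, ‖a i‖ ^ 2 :=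
    sum_congr rfl fun i _ => real_inner_self_eq_norm_sq _
  have hNs : ∑ i, ∑ j, g i j = ‖∑ i, a i‖ ^ 2 := by
    rw [← real_inner_self_eq_norm_sq, sum_inner]
    exact sum_congr rfl fun i _ => (inner_sum _ _ _).symm
  calc ∑ S : Finset (Fin n),
        (if S.card = τ then ((n.choose τ : ℝ))⁻¹ else 0) * ‖∑ i ∈ S, c • a i‖ ^ 2
      = ∑ S ∈ P, ((n.choose τ : ℝ))⁻¹ * ‖∑ i ∈ S, c • a i‖ ^ 2 := step1
    _ = ((n.choose τ : ℝ))⁻¹ * c ^ 2 * ∑ S ∈ P, ∑ i, ∑ j, (if i ∈ S ∧ j ∈ S then g i j else 0) := by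
        rw [mul_sum]
        refine sum_congr rfl fun S _ => ?_
        rw [step2 S, step3 S]; ring
    _ = ((n.choose τ : ℝ))⁻¹ * c ^ 2 * ((A - B) * (∑ i, ‖a i‖ ^ 2) + B * ‖∑ i, a i‖ ^ 2) := by
        rw [step4, step5, hSq, hNs]
    _ = _ := by
        rw [hAdef, hBdef, hc]
        field_simp
        ring
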